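/- The number of 132-avoiding permutations of length n with exactly c skew indecomposable components equals (c/n)·binom(2n−c−1, n−1), for 1 ≤ c ≤ n. -/
import Mathlib


/-- A permutation `σ` of `{0, …, n-1}` avoids the pattern 132 if there are no positions
`i < j < k` with `σ i < σ k < σ j`. -/
def Avoids132 {n : ℕ} (σ : Equiv.Perm (Fin n)) : Prop :=
  ¬ ∃ i j k : Fin n, i < j ∧ j < k ∧ σ i < σ k ∧ σ k < σ j

/-- `σ` splits skewly at position `m` (with `0 < m < n`) if the first `m` entries are
exactly the `m` largest values. -/
def SkewSplitAt {n : ℕ} (σ : Equiv.Perm (Fin n)) (m : ℕ) : Prop :=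
  ∀ i : Fin n, (i : ℕ) < m ↔ n - m ≤ (σ i : ℕ)

open Classical in
/-- The number of skew indecomposable components of `σ`: one more than the number of
internal skew split positions. -/
noncomputable def skewComponents {n : ℕ} (σ : Equiv.Perm (Fin n)) : ℕ :=
  1 + ((Finset.Ioo 0 n).filter (fun m => SkewSplitAt σ m)).card

open Finset Equiv

variable {n : ℕ}

lemma card_le_of_vals_Ico (T : Finset (Fin n)) (lo hi : ℕ)
    (h : ∀ v ∈ T, lo ≤ (v : ℕ) ∧ (v : ℕ) < hi) : T.card ≤ hi - lo := by
  calc T.card = (T.image Fin.val).card :=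
        (Finset.card_image_of_injective _ Fin.val_injective).symm
    _ ≤ (Finset.Ico lo hi).card := by
        apply Finset.card_le_card
        intro v hv
        simp only [Finset.mem_image] at hv
        obtain ⟨w, hw, rfl⟩ := hv
        simpa using h w hw
    _ = hi - lo := Nat.card_Ico lo hi

lemma top_block (σ : Equiv.Perm (Fin n)) (A : Finset (Fin n))
    (h : ∀ i ∈ A, ∀ k ∉ A, (σ k : ℕ) < (σ i : ℕ)) (i : Fin n) :
    i ∈ A ↔ n - A.card ≤ (σ i : ℕ) := by
  have hcompl : Aᶜ.card = n - A.card := by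
    rw [Finset.card_compl, Fintype.card_fin]
  constructor
  · intro hi
    have h1 : (Aᶜ.image σ).card ≤ (σ i : ℕ) - 0 := by
      apply card_le_of_vals_Ico
      intro v hv
      simp only [Finset.mem_image] at hv
      obtain ⟨k, hk, rfl⟩ := hv
      exact ⟨Nat.zero_le _, h i hi k (by simpa using hk)⟩
    rw [Finset.card_image_of_injective _ σ.injective, hcompl] at h1
    omega
  · intro hσ
    by_contra hi
    have h1 : (A.image σ).card ≤ n - ((σ i : ℕ) + 1) := by
      apply card_le_of_vals_Ico
      intro v hv
      simp only [Finset.mem_image] at hv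
      obtain ⟨k, hk, rfl⟩ := hv
      have := h k hk i hi
      have := (σ k).isLt
      omega
    rw [Finset.card_image_of_injective _ σ.injective] at h1
    have := (σ i).isLt
    omega

lemma pat132 {σ : Equiv.Perm (Fin n)} (hσ : Avoids132 σ) {i j k : Fin n}
    (hij : (i : ℕ) < j) (hjk : (j : ℕ) < k) (h1 : (σ i : ℕ) < σ k) (h2 : (σ k : ℕ) < σ j) :
    False :=
  hσ ⟨i, j, k, Fin.lt_def.mpr hij, Fin.lt_def.mpr hjk, Fin.lt_def.mpr h1, Fin.lt_def.mpr h2⟩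

lemma phi_zones (hn : 2 ≤ n) (σ : Equiv.Perm (Fin n)) (hσ : Avoids132 σ)
    (h0 : (σ ⟨0, by omega⟩ : ℕ) ≠ n - 1) (pF qF : Fin n)
    (hp : (σ pF : ℕ) = n - 1) (hq : (σ qF : ℕ) = n - 2) :
    (qF : ℕ) < (pF : ℕ) ∧
      (∀ i : Fin n, (i = pF ∨ (i : ℕ) ≤ (qF : ℕ)) ↔ n - 2 - (qF : ℕ) ≤ (σ i : ℕ)) := by
  have hqp : qF ≠ pF := fun h => by rw [h, hp] at hq; omega
  have hp0 : pF ≠ ⟨0, by omega⟩ := fun h => by rw [h] at hp; exact h0 hp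
  have hqlt : (qF : ℕ) < (pF : ℕ) := by
    by_contra hcon
    have hpv : 0 < (pF:ℕ) := by
      rcases Nat.eq_zero_or_pos (pF:ℕ) with h | h
      · exact absurd (Fin.ext h) hp0
      · exact h
    have hne : (pF:ℕ) ≠ (qF:ℕ) := fun h => hqp (Fin.ext h.symm)
    push_neg at hcon
    have hq0 : (⟨0, by omega⟩ : Fin n) ≠ qF := by
      intro h
      have hqv : (qF : ℕ) = 0 := by rw [← h]
      omega
    have h0lt : (σ ⟨0, by omega⟩ : ℕ) < n - 2 := by
      have := (σ ⟨0, by omega⟩).isLt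
      have hne2 : (σ ⟨0, by omega⟩ : ℕ) ≠ n - 2 := by
        intro h
        exact hq0 (σ.injective (Fin.ext (h.trans hq.symm)))
      omega
    exact pat132 hσ (i := ⟨0, by omega⟩) (j := pF) (k := qF) hpv (by omega)
      (by rw [hq]; omega) (by rw [hq, hp]; omega)
  refine ⟨hqlt, ?_⟩
  have key := top_block σ (insert pF (Finset.Iic qF)) ?_
  · have hcard : (insert pF (Finset.Iic qF)).card = (qF : ℕ) + 2 := by
      rw [Finset.card_insert_of_notMem (by
        simp only [Finset.mem_Iic]
        intro hmem
        have := Fin.le_def.mp hmem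
        omega), Fin.card_Iic]
    intro i
    have := key i
    rw [hcard] at this
    simp only [Finset.mem_insert, Finset.mem_Iic, Fin.le_def] at this
    have hn2 : n - ((qF:ℕ) + 2) = n - 2 - (qF:ℕ) := by omega
    rw [hn2] at this
    exact this
  · intro i hi k hk
    simp only [Finset.mem_insert, Finset.mem_Iic, Fin.le_def] at hi hk
    push_neg at hk
    obtain ⟨hk1, hk2⟩ := hk
    have hkq : (qF:ℕ) < (k:ℕ) := by omega
    have hkp : (σ k : ℕ) ≠ n - 1 := fun h =>
      hk1 (σ.injective (Fin.ext (h.trans hp.symm)))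
    have hkq2 : (σ k : ℕ) ≠ n - 2 := by
      intro h
      have : k = qF := σ.injective (Fin.ext (h.trans hq.symm))
      omega
    have hklt := (σ k).isLt
    rcases hi with rfl | hi
    · omega
    · rcases eq_or_lt_of_le hi with heq | hlt
      · have : i = qF := Fin.ext heq
        rw [this, hq]
        omega
      · by_contra hcon
        push_neg at hcon
        have hne : σ i ≠ σ k := fun h => by
          have : i = k := σ.injective h
          omega
        have : (σ i : ℕ) < (σ k : ℕ) := by
          have : (σ i : ℕ) ≠ (σ k : ℕ) := fun h => hne (Fin.ext h)
          omega
        exact pat132 hσ hlt hkq this (by rw [hq]; omega)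

/-- the cycle sending `v ↦ v+1` for `a ≤ v < n-1`, `n-1 ↦ a`, fixing `v < a`. -/
def cyc (n a : ℕ) (ha : a < n) : Equiv.Perm (Fin n) where
  toFun v := if (v : ℕ) < a then v else if h : (v : ℕ) = n - 1 then ⟨a, ha⟩
    else ⟨(v : ℕ) + 1, by have := v.isLt; omega⟩
  invFun v := if (v : ℕ) < a then v else if (v : ℕ) = a then ⟨n - 1, by omega⟩
    else ⟨(v : ℕ) - 1, by have := v.isLt; omega⟩
  left_inv := by
    intro v
    have hv := v.isLt
    by_cases h1 : (v : ℕ) < a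
    · simp [h1]
    · by_cases h2 : (v : ℕ) = n - 1
      · simp only [h1, if_false, dif_pos h2]
        have : ¬ (a < a) := lt_irrefl a
        simp only [this, if_false, if_pos rfl]
        apply Fin.ext; simp [h2]
      · simp only [h1, if_false, dif_neg h2]
        have h3 : ¬ ((v:ℕ) + 1 < a) := by omega
        have h4 : ¬ ((v:ℕ) + 1 = a) := by omega
        simp only [h3, if_false, h4, if_false]
        apply Fin.ext; simp
  right_inv := by
    intro v
    have hv := v.isLt
    by_cases h1 : (v : ℕ) < a
    · simp [h1]
    · by_cases h2 : (v : ℕ) = a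
      · simp only [h1, if_false, if_pos h2]
        have h3 : ¬ (n - 1 < a) := by omega
        simp only [h3, if_false]
        simp only [dite_true]
        apply Fin.ext; simp [h2]
      · simp only [h1, if_false, if_neg h2]
        have h3 : ¬ ((v:ℕ) - 1 < a) := by omega
        have h4 : ¬ ((v:ℕ) - 1 = n - 1) := by omega
        simp only [h3, if_false, dif_neg h4]
        apply Fin.ext; simp; omega

lemma cyc_apply_of_lt {a : ℕ} (ha : a < n) {v : Fin n} (h : (v : ℕ) < a) :
    cyc n a ha v = v := by simp [cyc, Equiv.coe_fn_mk, h]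

lemma cyc_apply_mid {a : ℕ} (ha : a < n) {v : Fin n} (h1 : a ≤ (v : ℕ)) (h2 : (v : ℕ) < n - 1) :
    ((cyc n a ha v : Fin n) : ℕ) = (v : ℕ) + 1 := by
  simp only [cyc, Equiv.coe_fn_mk]
  rw [if_neg (by omega), dif_neg (by omega)]

lemma cyc_apply_top {a : ℕ} (ha : a < n) {v : Fin n} (h : (v : ℕ) = n - 1) :
    ((cyc n a ha v : Fin n) : ℕ) = a := by
  simp only [cyc, Equiv.coe_fn_mk]
  rw [if_neg (by omega), dif_pos h]

lemma cyc_symm_of_lt {a : ℕ} (ha : a < n) {v : Fin n} (h : (v : ℕ) < a) :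
    (cyc n a ha).symm v = v := by simp [cyc, Equiv.coe_fn_symm_mk, h]

lemma cyc_symm_eq {a : ℕ} (ha : a < n) {v : Fin n} (h : (v : ℕ) = a) :
    (((cyc n a ha).symm v : Fin n) : ℕ) = n - 1 := by
  simp only [cyc, Equiv.coe_fn_symm_mk]
  rw [if_neg (by omega), if_pos h]

lemma cyc_symm_gt {a : ℕ} (ha : a < n) {v : Fin n} (h : a < (v : ℕ)) :
    (((cyc n a ha).symm v : Fin n) : ℕ) = (v : ℕ) - 1 := by
  simp only [cyc, Equiv.coe_fn_symm_mk]
  rw [if_neg (by omega), if_neg (by omega)]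

lemma cyc_congr {a a' : ℕ} (h : a = a') (ha : a < n) :
    cyc n a ha = cyc n a' (h ▸ ha) := by subst h; rfl

def Phi (hn : 2 ≤ n) (σ : Equiv.Perm (Fin n)) : Equiv.Perm (Fin n) :=
  σ.trans (cyc n (n - 2 - ((σ.symm ⟨n-2, by omega⟩ : Fin n) : ℕ)) (by omega))

def Psi (hn : 2 ≤ n) (σ' : Equiv.Perm (Fin n)) : Equiv.Perm (Fin n) :=
  σ'.trans (cyc n (n - 2 - ((σ'.symm ⟨n-1, by omega⟩ : Fin n) : ℕ)) (by omega)).symm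

lemma cyc_comp_spec (hn : 2 ≤ n) (σ : Equiv.Perm (Fin n)) (hσ : Avoids132 σ)
    (h0 : (σ ⟨0, by omega⟩ : ℕ) ≠ n - 1) (pF qF : Fin n)
    (hp : (σ pF : ℕ) = n - 1) (hq : (σ qF : ℕ) = n - 2) (ha : n - 2 - (qF:ℕ) < n) :
    Avoids132 (σ.trans (cyc n (n - 2 - (qF:ℕ)) ha)) ∧
    skewComponents (σ.trans (cyc n (n - 2 - (qF:ℕ)) ha)) = skewComponents σ + 1 ∧
    (((σ.trans (cyc n (n - 2 - (qF:ℕ)) ha)).symm ⟨n-1, by omega⟩ : Fin n) : ℕ) = (qF:ℕ) := by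
  classical
  obtain ⟨hqp, hiff⟩ := phi_zones hn σ hσ h0 pF qF hp hq
  set σ' := σ.trans (cyc n (n - 2 - (qF:ℕ)) ha) with hσ'def
  have hσ'app : ∀ i, σ' i = cyc n (n - 2 - (qF:ℕ)) ha (σ i) := fun i => rfl
  have hpn : (pF : ℕ) ≤ n - 1 := by have := pF.isLt; omega
  have hZ1 : ∀ i : Fin n, (i:ℕ) ≤ (qF:ℕ) → n - 2 - (qF:ℕ) ≤ (σ i:ℕ) ∧ (σ i:ℕ) ≤ n - 2 := by
    intro i hi
    have h1 := (hiff i).mpr ∘ (fun h => h)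
    have h2 := (hiff i).mp (Or.inr hi)
    have h3 : (σ i:ℕ) ≠ n-1 := by
      intro h
      have : i = pF := σ.injective (Fin.ext (by rw [h, hp]))
      rw [this] at hi; omega
    have := (σ i).isLt
    omega
  have hZ3 : ∀ i : Fin n, (qF:ℕ) < (i:ℕ) → i ≠ pF → (σ i:ℕ) < n - 2 - (qF:ℕ) := by
    intro i hi hip
    by_contra hcon
    push_neg at hcon
    rcases (hiff i).mpr hcon with h | h
    · exact hip h
    · omega
  have hP1 : ∀ i : Fin n, (i:ℕ) ≤ (qF:ℕ) → (σ' i : ℕ) = (σ i:ℕ) + 1 := by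
    intro i hi
    rw [hσ'app]
    exact cyc_apply_mid ha (hZ1 i hi).1 (by have := (hZ1 i hi).2; omega)
  have hPp : (σ' pF : ℕ) = n - 2 - (qF:ℕ) := by
    rw [hσ'app]; exact cyc_apply_top ha hp
  have hP3 : ∀ i : Fin n, (qF:ℕ) < (i:ℕ) → i ≠ pF → (σ' i : ℕ) = (σ i:ℕ) := by
    intro i hi hip
    rw [hσ'app, cyc_apply_of_lt ha (hZ3 i hi hip)]
  have zone : ∀ i : Fin n, (i:ℕ) ≤ (qF:ℕ) ∨ i = pF ∨ ((qF:ℕ) < (i:ℕ) ∧ i ≠ pF) := by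
    intro i
    by_cases h : i = pF
    · exact Or.inr (Or.inl h)
    · rcases le_or_gt (i:ℕ) (qF:ℕ) with h' | h'
      · exact Or.inl h'
      · exact Or.inr (Or.inr ⟨h', h⟩)
  have hpv : ∀ i : Fin n, i ≠ pF ↔ (i:ℕ) ≠ (pF:ℕ) := fun i =>
    ⟨fun h h' => h (Fin.ext h'), fun h h' => h (by rw [h'])⟩
  -- avoidance
  have havoid : Avoids132 σ' := by
    rintro ⟨i, j, k, hij, hjk, h1, h2⟩
    rw [Fin.lt_def] at hij hjk h1 h2
    rcases zone i with hi | hi | hi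
    · -- i in Z1; then k must be in Z1, hence j too
      have hik : (k:ℕ) ≤ (qF:ℕ) := by
        rcases zone k with h | h | h
        · exact h
        · exfalso; rw [h, hPp] at h1; have := (hZ1 i hi).1; have := hP1 i hi; omega
        · exfalso; have := hP3 k h.1 h.2; have := hZ3 k h.1 h.2
          have := (hZ1 i hi).1; have := hP1 i hi; omega
      have hjq : (j:ℕ) ≤ (qF:ℕ) := by omega
      have e1 := hP1 i hi; have e2 := hP1 j hjq; have e3 := hP1 k hik
      exact pat132 hσ hij hjk (by omega) (by omega)
    · -- i = pF
      have hiv : (i:ℕ) = (pF:ℕ) := by rw [hi]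
      have hjz : (qF:ℕ) < (j:ℕ) ∧ j ≠ pF := ⟨by omega, by rw [hpv]; omega⟩
      have hkz : (qF:ℕ) < (k:ℕ) ∧ k ≠ pF := ⟨by omega, by rw [hpv]; omega⟩
      have := hP3 j hjz.1 hjz.2; have := hZ3 j hjz.1 hjz.2
      have := hP3 k hkz.1 hkz.2; have := hZ3 k hkz.1 hkz.2
      have hPi : (σ' i : ℕ) = n - 2 - (qF:ℕ) := by rw [hi]; exact hPp
      omega
    · -- i in Z3
      have e1 := hP3 i hi.1 hi.2
      rcases zone j with hj | hj | hj
      · omega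
      · -- j = pF, so k in Z3
        have hjv : (j:ℕ) = (pF:ℕ) := by rw [hj]
        have hkz : (qF:ℕ) < (k:ℕ) ∧ k ≠ pF := ⟨by omega, by rw [hpv]; omega⟩
        have e3 := hP3 k hkz.1 hkz.2
        have hk3 := hZ3 k hkz.1 hkz.2
        exact pat132 hσ hij hjk (by omega) (by rw [hj, hp]; omega)
      · have e2 := hP3 j hj.1 hj.2
        have hj3 := hZ3 j hj.1 hj.2
        rcases zone k with hk | hk | hk
        · omega
        · exfalso; rw [hk, hPp] at h2; omega
        · have e3 := hP3 k hk.1 hk.2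
          exact pat132 hσ hij hjk (by omega) (by omega)
  -- splits
  have hqn : (qF:ℕ) + 1 < n := by omega
  have hsplitnew : SkewSplitAt σ' ((qF:ℕ)+1) := by
    intro i
    constructor
    · intro hi
      have := hP1 i (by omega)
      have := (hZ1 i (by omega)).1
      omega
    · intro hi
      by_contra hcon
      push_neg at hcon
      rcases zone i with h | h | h
      · omega
      · rw [h, hPp] at hi; omega
      · have := hP3 i h.1 h.2; have := hZ3 i h.1 h.2; omega
  have hnotsplit : ¬ SkewSplitAt σ ((qF:ℕ)+1) := by
    intro h
    have := (h pF).mpr (by rw [hp]; omega)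
    omega
  have hiffm : ∀ m, 0 < m → m < n → m ≠ (qF:ℕ)+1 → (SkewSplitAt σ m ↔ SkewSplitAt σ' m) := by
    intro m hm0 hmn hmq
    rcases le_or_gt m (qF:ℕ) with hle | hgt
    · apply iff_of_false
      · intro h
        have := (h pF).mpr (by rw [hp]; omega)
        omega
      · intro h
        have hv : (σ' qF : ℕ) = n - 1 := by
          rw [hP1 qF (le_refl _), hq]; omega
        have := (h qF).mpr (by rw [hv]; omega)
        omega
    · have hge : (qF:ℕ) + 2 ≤ m := by omega
      have hv : ∀ i : Fin n, (n - m ≤ (σ i:ℕ)) ↔ (n - m ≤ (σ' i:ℕ)) := by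
        intro i
        rcases zone i with h | h | h
        · have := hP1 i h; have := (hZ1 i h).1; omega
        · rw [h, hPp, hp]; omega
        · rw [hP3 i h.1 h.2]
      constructor
      · intro h i; rw [← hv i]; exact h i
      · intro h i; rw [hv i]; exact h i
  have hset : (Finset.Ioo 0 n).filter (fun m => SkewSplitAt σ' m)
      = insert ((qF:ℕ)+1) ((Finset.Ioo 0 n).filter (fun m => SkewSplitAt σ m)) := by
    ext m
    simp only [Finset.mem_insert, Finset.mem_filter, Finset.mem_Ioo]
    constructor
    · rintro ⟨⟨hm0, hmn⟩, hs⟩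
      by_cases hmq : m = (qF:ℕ)+1
      · exact Or.inl hmq
      · exact Or.inr ⟨⟨hm0, hmn⟩, (hiffm m hm0 hmn hmq).mpr hs⟩
    · rintro (rfl | ⟨⟨hm0, hmn⟩, hs⟩)
      · exact ⟨⟨by omega, hqn⟩, hsplitnew⟩
      · refine ⟨⟨hm0, hmn⟩, ?_⟩
        by_cases hmq : m = (qF:ℕ)+1
        · rw [hmq] at hs; exact absurd hs hnotsplit
        · exact (hiffm m hm0 hmn hmq).mp hs
  have hcomps : skewComponents σ' = skewComponents σ + 1 := by
    unfold skewComponents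
    rw [Finset.filter_congr_decidable, Finset.filter_congr_decidable, hset,
      Finset.card_insert_of_notMem]
    · omega
    · simp only [Finset.mem_filter, Finset.mem_Ioo]
      rintro ⟨_, hs⟩
      exact hnotsplit hs
  refine ⟨havoid, hcomps, ?_⟩
  have : σ' qF = ⟨n-1, by omega⟩ := by
    apply Fin.ext
    show (σ' qF : ℕ) = n - 1
    rw [hP1 qF (le_refl _), hq]; omega
  rw [← this, Equiv.symm_apply_apply]

lemma cyc_symm_cancel {a a' : ℕ} (heq : a = a') (h : a < n) (h' : a' < n) (v : Fin n) :
    (cyc n a h).symm (cyc n a' h' v) = v := by subst heq; simp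

lemma cyc_cancel_symm {a a' : ℕ} (heq : a = a') (h : a < n) (h' : a' < n) (v : Fin n) :
    cyc n a h ((cyc n a' h').symm v) = v := by subst heq; simp

lemma phi_spec (hn : 2 ≤ n) (σ : Equiv.Perm (Fin n)) (hσ : Avoids132 σ)
    (h0 : (σ ⟨0, by omega⟩ : ℕ) ≠ n - 1) :
    Avoids132 (Phi hn σ) ∧ skewComponents (Phi hn σ) = skewComponents σ + 1 ∧
      Psi hn (Phi hn σ) = σ := by
  have hp : (σ (σ.symm ⟨n-1, by omega⟩) : ℕ) = n - 1 := by
    rw [Equiv.apply_symm_apply]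
  have hq : (σ (σ.symm ⟨n-2, by omega⟩) : ℕ) = n - 2 := by
    rw [Equiv.apply_symm_apply]
  obtain ⟨h1, h2, h3⟩ := cyc_comp_spec hn σ hσ h0 (σ.symm ⟨n-1, by omega⟩)
    (σ.symm ⟨n-2, by omega⟩) hp hq (by omega)
  refine ⟨h1, h2, ?_⟩
  apply Equiv.ext
  intro x
  simp only [Psi, Phi, Equiv.trans_apply]
  exact cyc_symm_cancel (by rw [h3]) _ _ (σ x)

set_option maxHeartbeats 1000000 in
lemma psi_spec (hn : 2 ≤ n) (σ' : Equiv.Perm (Fin n)) (hσ' : Avoids132 σ')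
    (hcomp : 2 ≤ skewComponents σ') :
    Avoids132 (Psi hn σ') ∧ ((Psi hn σ' ⟨0, by omega⟩ : Fin n) : ℕ) ≠ n - 1 ∧
      Phi hn (Psi hn σ') = σ' := by
  classical
  have hq'v : (σ' (σ'.symm ⟨n-1, by omega⟩) : ℕ) = n - 1 := by rw [Equiv.apply_symm_apply]
  set q'F : Fin n := σ'.symm ⟨n-1, by omega⟩ with hq'def
  -- there is a split, so q' + 1 < n
  have hex : ∃ m ∈ Finset.Ioo 0 n, SkewSplitAt σ' m := by
    by_contra h
    push_neg at h
    have : ((Finset.Ioo 0 n).filter (fun m => SkewSplitAt σ' m)) = ∅ := by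
      apply Finset.filter_eq_empty_iff.mpr
      intro m hm
      exact h m hm
    unfold skewComponents at hcomp
    rw [Finset.filter_congr_decidable] at hcomp
    rw [this] at hcomp
    simp at hcomp
  obtain ⟨m0, hm0, hs0⟩ := hex
  rw [Finset.mem_Ioo] at hm0
  have hq'le : (q'F:ℕ) + 1 < n := by
    have h1 := (hs0 q'F).mpr (by rw [hq'v]; omega)
    omega
  -- prefix of length q'+1 is the top block
  have W2 : ∀ i : Fin n, (i:ℕ) ≤ (q'F:ℕ) ↔ n - 1 - (q'F:ℕ) ≤ (σ' i:ℕ) := by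
    have key := top_block σ' (Finset.Iic q'F) ?_
    · intro i
      have := key i
      rw [Fin.card_Iic] at this
      simp only [Finset.mem_Iic, Fin.le_def] at this
      have hn2 : n - ((q'F:ℕ) + 1) = n - 1 - (q'F:ℕ) := by omega
      rw [hn2] at this
      exact this
    · intro i hi k hk
      simp only [Finset.mem_Iic, Fin.le_def] at hi hk
      push_neg at hk
      have hkne : (σ' k : ℕ) ≠ n - 1 := by
        intro h
        have : k = q'F := σ'.injective (Fin.ext (by rw [h, hq'v]))
        omega
      have hklt := (σ' k).isLt
      rcases eq_or_lt_of_le hi with heq | hlt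
      · have : i = q'F := Fin.ext heq
        rw [this, hq'v]
        omega
      · by_contra hcon
        push_neg at hcon
        have hne : (σ' i : ℕ) ≠ (σ' k : ℕ) := by
          intro h
          have : i = k := σ'.injective (Fin.ext h)
          omega
        exact pat132 hσ' (i := i) (j := q'F) (k := k) hlt (by omega) (by omega)
          (by rw [hq'v]; omega)
  have ha : n - 2 - (q'F:ℕ) < n := by omega
  have hpv : (σ' (σ'.symm ⟨n - 2 - (q'F:ℕ), ha⟩) : ℕ) = n - 2 - (q'F:ℕ) := by
    rw [Equiv.apply_symm_apply]
  set pF : Fin n := σ'.symm ⟨n - 2 - (q'F:ℕ), ha⟩ with hpFdef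
  have hpgt : (q'F:ℕ) < (pF:ℕ) := by
    by_contra h
    push_neg at h
    have := (W2 pF).mp h
    omega
  have hZ3' : ∀ i : Fin n, (q'F:ℕ) < (i:ℕ) → i ≠ pF → (σ' i : ℕ) < n - 2 - (q'F:ℕ) := by
    intro i h1 h2
    have hw := (W2 i)
    have hnle : ¬ ((i:ℕ) ≤ (q'F:ℕ)) := by omega
    have hlt : (σ' i : ℕ) < n - 1 - (q'F:ℕ) := by
      by_contra hc
      push_neg at hc
      exact hnle (hw.mpr hc)
    have hne : (σ' i : ℕ) ≠ n - 2 - (q'F:ℕ) := by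
      intro h
      exact h2 (σ'.injective (Fin.ext (by rw [h, hpv])))
    omega
  -- pointwise description of σ := Psi hn σ'
  set σ : Equiv.Perm (Fin n) := Psi hn σ' with hσdef
  have happ : ∀ i, σ i = (cyc n (n - 2 - (q'F:ℕ)) ha).symm (σ' i) := fun i => rfl
  have hP1 : ∀ i : Fin n, (i:ℕ) ≤ (q'F:ℕ) →
      (σ i : ℕ) = (σ' i:ℕ) - 1 ∧ n - 2 - (q'F:ℕ) ≤ (σ i : ℕ) ∧ (σ i : ℕ) ≤ n - 2 := by
    intro i hi
    have hge := (W2 i).mp hi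
    have hlt := (σ' i).isLt
    have := happ i
    have hgt : n - 2 - (q'F:ℕ) < (σ' i : ℕ) := by omega
    have hval : (σ i : ℕ) = (σ' i:ℕ) - 1 := by rw [happ i]; exact cyc_symm_gt ha hgt
    exact ⟨hval, by omega, by omega⟩
  have hPp : (σ pF : ℕ) = n - 1 := by
    rw [happ pF]
    exact cyc_symm_eq ha hpv
  have hP3 : ∀ i : Fin n, (q'F:ℕ) < (i:ℕ) → i ≠ pF → (σ i : ℕ) = (σ' i:ℕ) := by
    intro i h1 h2
    rw [happ i, cyc_symm_of_lt ha (hZ3' i h1 h2)]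
  have zone : ∀ i : Fin n, (i:ℕ) ≤ (q'F:ℕ) ∨ i = pF ∨ ((q'F:ℕ) < (i:ℕ) ∧ i ≠ pF) := by
    intro i
    by_cases h : i = pF
    · exact Or.inr (Or.inl h)
    · rcases le_or_gt (i:ℕ) (q'F:ℕ) with h' | h'
      · exact Or.inl h'
      · exact Or.inr (Or.inr ⟨h', h⟩)
  have hpvne : ∀ i : Fin n, i ≠ pF ↔ (i:ℕ) ≠ (pF:ℕ) := fun i =>
    ⟨fun h h' => h (Fin.ext h'), fun h h' => h (by rw [h'])⟩
  -- σ avoids 132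
  have havoid : Avoids132 σ := by
    rintro ⟨i, j, k, hij, hjk, h1, h2⟩
    rw [Fin.lt_def] at hij hjk h1 h2
    rcases zone j with hj | hj | hj
    · -- j in Z1, so i in Z1; k in Z1 too
      have hi1 : (i:ℕ) ≤ (q'F:ℕ) := by omega
      obtain ⟨e1, b1, c1⟩ := hP1 i hi1
      obtain ⟨e2, b2, c2⟩ := hP1 j hj
      rcases zone k with hk | hk | hk
      · obtain ⟨e3, b3, c3⟩ := hP1 k hk
        have f1 := (W2 i).mp hi1
        have f2 := (W2 j).mp hj
        have f3 := (W2 k).mp hk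
        exact pat132 hσ' hij hjk (by omega) (by omega)
      · exfalso
        have : (σ k : ℕ) = n - 1 := by rw [hk]; exact hPp
        omega
      · have := hP3 k hk.1 hk.2
        have := hZ3' k hk.1 hk.2
        omega
    · -- j = pF
      have hjv : (j:ℕ) = (pF:ℕ) := by rw [hj]
      have hjval : (σ j : ℕ) = n - 1 := by rw [hj]; exact hPp
      have hkz : (q'F:ℕ) < (k:ℕ) ∧ k ≠ pF := ⟨by omega, by rw [hpvne]; omega⟩
      have e3 := hP3 k hkz.1 hkz.2
      have f3 := hZ3' k hkz.1 hkz.2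
      rcases zone i with hi | hi | hi
      · obtain ⟨e1, b1, c1⟩ := hP1 i hi
        omega
      · have : (i:ℕ) = (pF:ℕ) := by rw [hi]
        omega
      · have e1 := hP3 i hi.1 hi.2
        exact pat132 hσ' hij hjk (by omega) (by rw [hj, hpv]; omega)
    · -- j in Z3
      have e2 := hP3 j hj.1 hj.2
      have f2 := hZ3' j hj.1 hj.2
      rcases zone i with hi | hi | hi
      · obtain ⟨e1, b1, c1⟩ := hP1 i hi
        omega
      · have : (σ i : ℕ) = n - 1 := by rw [hi]; exact hPp
        have := (σ k).isLt
        omega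
      · have e1 := hP3 i hi.1 hi.2
        rcases zone k with hk | hk | hk
        · omega
        · have : (σ k : ℕ) = n - 1 := by rw [hk]; exact hPp
          have := (σ' j).isLt
          omega
        · have e3 := hP3 k hk.1 hk.2
          exact pat132 hσ' hij hjk (by omega) (by omega)
  -- σ 0 ≠ n - 1
  have hzero : ((σ ⟨0, by omega⟩ : Fin n) : ℕ) ≠ n - 1 := by
    obtain ⟨e, b, c⟩ := hP1 ⟨0, by omega⟩ (by simp)
    omega
  refine ⟨havoid, hzero, ?_⟩
  -- Phi hn σ = σ'
  have hσq : (σ.symm ⟨n-2, by omega⟩ : Fin n) = q'F := by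
    rw [Equiv.symm_apply_eq]
    apply Fin.ext
    show (n - 2 : ℕ) = ((σ q'F : Fin n) : ℕ)
    obtain ⟨e, b, c⟩ := hP1 q'F (le_refl _)
    omega
  apply Equiv.ext
  intro x
  simp only [Phi, Equiv.trans_apply]
  have hxval : σ x = (cyc n (n - 2 - (q'F:ℕ)) ha).symm (σ' x) := happ x
  rw [hxval]
  exact cyc_cancel_symm (by rw [hσq]) _ _ (σ' x)

section DelIns
variable {m : ℕ}

def Ins (τ : Equiv.Perm (Fin m)) : Equiv.Perm (Fin (m+1)) where
  toFun i := Fin.cases (Fin.last m) (fun j => (τ j).castSucc) i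
  invFun v := Fin.lastCases 0 (fun w => (τ.symm w).succ) v
  left_inv := by
    intro i
    induction i using Fin.cases with
    | zero => simp
    | succ j => simp
  right_inv := by
    intro v
    induction v using Fin.lastCases with
    | last => simp
    | cast w => simp

lemma Ins_zero (τ : Equiv.Perm (Fin m)) : Ins τ 0 = Fin.last m := rfl

lemma Ins_succ (τ : Equiv.Perm (Fin m)) (j : Fin m) : Ins τ j.succ = (τ j).castSucc := by
  simp [Ins]

lemma Ins_succ_val (τ : Equiv.Perm (Fin m)) (j : Fin m) :
    ((Ins τ j.succ : Fin (m+1)) : ℕ) = ((τ j : Fin m) : ℕ) := by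
  rw [Ins_succ]; rfl

def Del (σ : Equiv.Perm (Fin (m+1))) (h : σ 0 = Fin.last m) : Equiv.Perm (Fin m) where
  toFun j := (σ j.succ).castPred (by
    intro hc
    have := σ.injective (hc.trans h.symm)
    exact (Fin.succ_ne_zero j) this)
  invFun j := (σ.symm j.castSucc).pred (by
    intro hc
    have h2 : j.castSucc = σ 0 := by rw [← hc, Equiv.apply_symm_apply]
    rw [h] at h2
    exact absurd h2 (Fin.ne_of_lt (Fin.castSucc_lt_last j)))
  left_inv := by
    intro j
    simp [Fin.castSucc_castPred, Fin.pred_succ]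
  right_inv := by
    intro j
    simp [Fin.succ_pred, Fin.castPred_castSucc]

lemma Del_val (σ : Equiv.Perm (Fin (m+1))) (h : σ 0 = Fin.last m) (j : Fin m) :
    ((Del σ h j : Fin m) : ℕ) = ((σ j.succ : Fin (m+1)) : ℕ) := rfl

lemma Ins_Del (σ : Equiv.Perm (Fin (m+1))) (h : σ 0 = Fin.last m) : Ins (Del σ h) = σ := by
  apply Equiv.ext
  intro i
  induction i using Fin.cases with
  | zero => rw [Ins_zero, h]
  | succ j =>
      rw [Ins_succ]
      apply Fin.ext
      rw [Fin.coe_castSucc, Del_val]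

lemma Del_Ins (τ : Equiv.Perm (Fin m)) (h : Ins τ 0 = Fin.last m) : Del (Ins τ) h = τ := by
  apply Equiv.ext
  intro j
  apply Fin.ext
  rw [Del_val, Ins_succ_val]

lemma Ins_avoids (τ : Equiv.Perm (Fin m)) (hτ : Avoids132 τ) : Avoids132 (Ins τ) := by
  rintro ⟨i, j, k, hij, hjk, h1, h2⟩
  rw [Fin.lt_def] at hij hjk h1 h2
  induction k using Fin.cases with
  | zero =>
    have e0 : ((0 : Fin (m+1)) : ℕ) = 0 := rfl
    omega
  | succ k' =>
    induction j using Fin.cases with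
    | zero =>
      have e0 : ((0 : Fin (m+1)) : ℕ) = 0 := rfl
      omega
    | succ j' =>
      induction i using Fin.cases with
      | zero =>
        have e1 : ((Ins τ 0 : Fin (m+1)) : ℕ) = m := rfl
        have e3 := Ins_succ_val τ k'
        have := (τ k').isLt
        omega
      | succ i' =>
        have e1 := Ins_succ_val τ i'
        have e2 := Ins_succ_val τ j'
        have e3 := Ins_succ_val τ k'
        simp only [Fin.val_succ] at hij hjk
        exact pat132 hτ (i := i') (j := j') (k := k') (by omega) (by omega)
          (by omega) (by omega)

lemma Ins_avoids' (τ : Equiv.Perm (Fin m)) (h : Avoids132 (Ins τ)) : Avoids132 τ := by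
  rintro ⟨i, j, k, hij, hjk, h1, h2⟩
  rw [Fin.lt_def] at hij hjk h1 h2
  have e1 := Ins_succ_val τ i
  have e2 := Ins_succ_val τ j
  have e3 := Ins_succ_val τ k
  exact pat132 h (i := i.succ) (j := j.succ) (k := k.succ)
    (by rw [Fin.val_succ, Fin.val_succ]; omega)
    (by rw [Fin.val_succ, Fin.val_succ]; omega) (by omega) (by omega)

lemma Ins_split_one (τ : Equiv.Perm (Fin m)) (hm : 1 ≤ m) : SkewSplitAt (Ins τ) 1 := by
  intro i
  induction i using Fin.cases with
  | zero =>
    have e1 : ((Ins τ 0 : Fin (m+1)) : ℕ) = m := rfl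
    have e0 : ((0 : Fin (m+1)) : ℕ) = 0 := rfl
    rw [e0, e1]
    omega
  | succ j =>
    have e := Ins_succ_val τ j
    have := (τ j).isLt
    rw [Fin.val_succ, e]
    omega

lemma Ins_split_iff (τ : Equiv.Perm (Fin m)) (t : ℕ) (ht : 1 ≤ t) :
    SkewSplitAt τ t ↔ SkewSplitAt (Ins τ) (t+1) := by
  constructor
  · intro h i
    induction i using Fin.cases with
    | zero =>
      have e1 : ((Ins τ 0 : Fin (m+1)) : ℕ) = m := rfl
      have e0 : ((0 : Fin (m+1)) : ℕ) = 0 := rfl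
      rw [e0, e1]
      omega
    | succ j =>
      have e := Ins_succ_val τ j
      have hj := h j
      rw [Fin.val_succ, e]
      omega
  · intro h j
    have := h j.succ
    rw [Fin.val_succ, Ins_succ_val] at this
    omega

lemma Ins_comps (τ : Equiv.Perm (Fin m)) (hm : 1 ≤ m) :
    skewComponents (Ins τ) = skewComponents τ + 1 := by
  classical
  unfold skewComponents
  rw [Finset.filter_congr_decidable, Finset.filter_congr_decidable]
  have hset : (Finset.Ioo 0 (m+1)).filter (fun t => SkewSplitAt (Ins τ) t)
      = insert 1 (((Finset.Ioo 0 m).filter (fun t => SkewSplitAt τ t)).image (· + 1)) := by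
    ext t
    simp only [Finset.mem_insert, Finset.mem_image, Finset.mem_filter, Finset.mem_Ioo]
    constructor
    · rintro ⟨⟨h0, hm1⟩, hs⟩
      by_cases h1 : t = 1
      · exact Or.inl h1
      · right
        refine ⟨t - 1, ⟨⟨by omega, by omega⟩, ?_⟩, by omega⟩
        have he : t - 1 + 1 = t := by omega
        apply (Ins_split_iff τ (t-1) (by omega)).mpr
        rw [he]
        exact hs
    · rintro (rfl | ⟨u, ⟨⟨hu0, hum⟩, hs⟩, rfl⟩)
      · exact ⟨⟨one_pos, by omega⟩, Ins_split_one τ hm⟩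
      · exact ⟨⟨by omega, by omega⟩, (Ins_split_iff τ u hu0).mp hs⟩
  rw [hset, Finset.card_insert_of_notMem, Finset.card_image_of_injective _
    (add_left_injective 1)]
  · omega
  · simp only [Finset.mem_image, Finset.mem_filter, Finset.mem_Ioo]
    rintro ⟨u, ⟨⟨hu0, _⟩, _⟩, hu1⟩
    omega

end DelIns

open Classical in
lemma card_case1 (m c : ℕ) (hm : 1 ≤ m) (hc : 1 ≤ c) :
    ((Finset.univ.filter (fun σ : Equiv.Perm (Fin (m+1)) =>
        Avoids132 σ ∧ skewComponents σ = c ∧ σ 0 = Fin.last m)).card)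
      = ((Finset.univ.filter (fun τ : Equiv.Perm (Fin m) =>
        Avoids132 τ ∧ skewComponents τ = c - 1)).card) := by
  have hmem : ∀ σ : Equiv.Perm (Fin (m+1)), σ ∈ Finset.univ.filter
      (fun σ : Equiv.Perm (Fin (m+1)) =>
        Avoids132 σ ∧ skewComponents σ = c ∧ σ 0 = Fin.last m) → σ 0 = Fin.last m := by
    intro σ h
    simp only [Finset.mem_filter] at h
    exact h.2.2.2
  refine Finset.card_bij' (fun σ hσ => Del σ (hmem σ hσ)) (fun τ _ => Ins τ) ?_ ?_ ?_ ?_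
  · -- hi
    intro σ hσ
    have h0 := hmem σ hσ
    simp only [Finset.mem_filter, Finset.mem_univ, true_and] at hσ ⊢
    obtain ⟨ha, hc, _⟩ := hσ
    have hid := Ins_Del σ h0
    constructor
    · apply Ins_avoids'
      rw [hid]
      exact ha
    · have := Ins_comps (Del σ h0) hm
      rw [hid] at this
      omega
  · -- hj
    intro τ hτ
    simp only [Finset.mem_filter, Finset.mem_univ, true_and] at hτ ⊢
    obtain ⟨ha, hc⟩ := hτ
    refine ⟨Ins_avoids τ ha, ?_, rfl⟩
    rw [Ins_comps τ hm, hc]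
    omega
  · -- left inverse
    intro σ hσ
    exact Ins_Del σ (hmem σ hσ)
  · -- right inverse
    intro τ hτ
    exact Del_Ins τ rfl

open Classical in
lemma card_case2 (n c : ℕ) (hn : 2 ≤ n) (hc : 1 ≤ c) :
    ((Finset.univ.filter (fun σ : Equiv.Perm (Fin n) =>
        Avoids132 σ ∧ skewComponents σ = c ∧ ¬ ((σ ⟨0, by omega⟩ : Fin n) : ℕ) = n - 1)).card)
      = ((Finset.univ.filter (fun σ' : Equiv.Perm (Fin n) =>
        Avoids132 σ' ∧ skewComponents σ' = c + 1)).card) := by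
  refine Finset.card_bij' (fun σ _ => Phi hn σ) (fun σ' _ => Psi hn σ') ?_ ?_ ?_ ?_
  · intro σ hσ
    simp only [Finset.mem_filter, Finset.mem_univ, true_and] at hσ ⊢
    obtain ⟨ha, hcc, h0⟩ := hσ
    obtain ⟨h1, h2, _⟩ := phi_spec hn σ ha h0
    exact ⟨h1, by omega⟩
  · intro σ' hσ'
    simp only [Finset.mem_filter, Finset.mem_univ, true_and] at hσ' ⊢
    obtain ⟨ha, hcc⟩ := hσ'
    obtain ⟨h1, h2, h3⟩ := psi_spec hn σ' ha (by omega)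
    refine ⟨h1, ?_, h2⟩
    obtain ⟨_, h5, _⟩ := phi_spec hn (Psi hn σ') h1 h2
    rw [h3] at h5
    omega
  · intro σ hσ
    simp only [Finset.mem_filter, Finset.mem_univ, true_and] at hσ
    exact (phi_spec hn σ hσ.1 hσ.2.2).2.2
  · intro σ' hσ'
    simp only [Finset.mem_filter, Finset.mem_univ, true_and] at hσ'
    exact (psi_spec hn σ' hσ'.1 (by omega)).2.2

lemma comps_pos (σ : Equiv.Perm (Fin n)) : 1 ≤ skewComponents σ := Nat.le_add_right 1 _

open Classical in
lemma card_zero_comps (m : ℕ) :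
    ((Finset.univ.filter (fun τ : Equiv.Perm (Fin m) =>
      Avoids132 τ ∧ skewComponents τ = 0)).card) = 0 := by
  rw [Finset.card_eq_zero, Finset.filter_eq_empty_iff]
  rintro τ _ ⟨_, hc⟩
  have := comps_pos τ
  omega

open Classical in
lemma card_rec (m c : ℕ) (hm : 1 ≤ m) (hc : 1 ≤ c) :
    ((Finset.univ.filter (fun σ : Equiv.Perm (Fin (m+1)) =>
        Avoids132 σ ∧ skewComponents σ = c)).card)
      = ((Finset.univ.filter (fun τ : Equiv.Perm (Fin m) =>
          Avoids132 τ ∧ skewComponents τ = c - 1)).card)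
        + ((Finset.univ.filter (fun σ : Equiv.Perm (Fin (m+1)) =>
          Avoids132 σ ∧ skewComponents σ = c + 1)).card) := by
  rw [← card_case1 m c hm hc, ← card_case2 (m+1) c (by omega) hc]
  have hpart := Finset.card_filter_add_card_filter_not
    (s := Finset.univ.filter (fun σ : Equiv.Perm (Fin (m+1)) =>
      Avoids132 σ ∧ skewComponents σ = c))
    (p := fun σ : Equiv.Perm (Fin (m+1)) => ((σ ⟨0, by omega⟩ : Fin (m+1)) : ℕ) = (m+1) - 1)
  rw [Finset.filter_filter, Finset.filter_filter] at hpart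
  rw [← hpart]
  congr 1
  · refine congrArg Finset.card (Finset.filter_congr ?_)
    intro σ _
    simp only [and_assoc]
    constructor
    · rintro ⟨h1, h2, h3⟩
      refine ⟨h1, h2, ?_⟩
      have h0 : (⟨0, by omega⟩ : Fin (m+1)) = 0 := rfl
      rw [h0] at h3
      apply Fin.ext
      rw [h3, Fin.val_last]
      omega
    · rintro ⟨h1, h2, h3⟩
      refine ⟨h1, h2, ?_⟩
      have h0 : (⟨0, by omega⟩ : Fin (m+1)) = 0 := rfl
      rw [h0, h3, Fin.val_last]
      omega
  · refine congrArg Finset.card (Finset.filter_congr ?_)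
    intro σ _
    simp only [and_assoc]

open Classical in
lemma card_base (n : ℕ) (hn : 1 ≤ n) :
    ((Finset.univ.filter (fun σ : Equiv.Perm (Fin n) =>
      Avoids132 σ ∧ skewComponents σ = n)).card) = 1 := by
  rw [Finset.card_eq_one]
  refine ⟨Fin.revPerm, ?_⟩
  apply Finset.eq_singleton_iff_unique_mem.mpr
  have hrev_val : ∀ i : Fin n, ((Fin.revPerm i : Fin n) : ℕ) = n - (i + 1) := by
    intro i
    simp [Fin.revPerm_apply, Fin.val_rev]
  have hrev_avoid : Avoids132 (Fin.revPerm (n := n)) := by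
    rintro ⟨i, j, k, hij, hjk, h1, h2⟩
    rw [Fin.lt_def] at hij hjk h1 h2
    rw [hrev_val, hrev_val] at h1
    have := i.isLt
    have := k.isLt
    omega
  have hrev_split : ∀ m', 0 < m' → m' < n → SkewSplitAt (Fin.revPerm (n := n)) m' := by
    intro m' h0 h1 i
    rw [hrev_val]
    have := i.isLt
    omega
  have hrev_comps : skewComponents (Fin.revPerm (n := n)) = n := by
    unfold skewComponents
    rw [Finset.filter_congr_decidable]
    rw [Finset.filter_true_of_mem (fun m' hm' => by
      rw [Finset.mem_Ioo] at hm'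
      exact hrev_split m' hm'.1 hm'.2)]
    rw [Nat.card_Ioo]
    omega
  constructor
  · simp only [Finset.mem_filter, Finset.mem_univ, true_and]
    exact ⟨hrev_avoid, hrev_comps⟩
  · intro σ hσ
    simp only [Finset.mem_filter, Finset.mem_univ, true_and] at hσ
    obtain ⟨ha, hc⟩ := hσ
    -- σ splits everywhere
    have hsub : (Finset.Ioo 0 n).filter (fun m' => SkewSplitAt σ m') = Finset.Ioo 0 n := by
      apply Finset.eq_of_subset_of_card_le (Finset.filter_subset _ _)
      unfold skewComponents at hc
      rw [Finset.filter_congr_decidable] at hc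
      rw [Nat.card_Ioo]
      omega
    have hall : ∀ m', 0 < m' → m' < n → SkewSplitAt σ m' := by
      intro m' h0 h1
      have : m' ∈ (Finset.Ioo 0 n).filter (fun m' => SkewSplitAt σ m') := by
        rw [hsub, Finset.mem_Ioo]
        exact ⟨h0, h1⟩
      exact (Finset.mem_filter.mp this).2
    apply Equiv.ext
    intro i
    apply Fin.ext
    rw [hrev_val]
    have hil := i.isLt
    have hub : (σ i : ℕ) ≤ n - 1 - (i : ℕ) := by
      rcases Nat.eq_zero_or_pos (i : ℕ) with h | h
      · have := (σ i).isLt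
        omega
      · have hs := hall (i : ℕ) h hil i
        omega
    have hlb : n - 1 - (i : ℕ) ≤ (σ i : ℕ) := by
      rcases Nat.lt_or_ge ((i : ℕ) + 1) n with h | h
      · have hs := hall ((i : ℕ) + 1) (by omega) h i
        omega
      · omega
    omega

lemma rhs_identity (n c : ℕ) (h1 : 1 ≤ c) (h2 : c < n) :
    (c:ℚ)/(n:ℚ) * ((2*n-c-1).choose (n-1) : ℚ)
      = ((c:ℚ)-1)/((n:ℚ)-1) * ((2*n-c-2).choose (n-2) : ℚ)
        + ((c:ℚ)+1)/(n:ℚ) * ((2*n-c-2).choose (n-1) : ℚ) := by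
  have hn2 : 2 ≤ n := by omega
  have pascal : (2*n-c-1).choose (n-1) = (2*n-c-2).choose (n-2) + (2*n-c-2).choose (n-1) := by
    have e1 : 2*n-c-1 = (2*n-c-2)+1 := by omega
    have e2 : n-1 = (n-2)+1 := by omega
    rw [e1, e2, Nat.choose_succ_succ, Nat.succ_eq_add_one, ← e2]
  have key : (2*n-c-2).choose (n-1) * (n-1) = (2*n-c-2).choose (n-2) * (n-c) := by
    have e2 : n-1 = (n-2)+1 := by omega
    rw [e2, Nat.choose_succ_right_eq]
    congr 1
    omega
  have c1 : ((2*n-c-1).choose (n-1) : ℚ)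
      = ((2*n-c-2).choose (n-2) : ℚ) + ((2*n-c-2).choose (n-1) : ℚ) := by
    exact_mod_cast congrArg (fun x : ℕ => (x : ℚ)) pascal
  have c2 : ((2*n-c-2).choose (n-1) : ℚ) * ((n:ℚ)-1)
      = ((2*n-c-2).choose (n-2) : ℚ) * ((n:ℚ)-(c:ℚ)) := by
    have h := congrArg (fun x : ℕ => (x : ℚ)) key
    push_cast [Nat.cast_sub (show 1 ≤ n by omega), Nat.cast_sub (show c ≤ n by omega)] at h
    exact h
  rw [c1]
  have hn0 : (n:ℚ) ≠ 0 := by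
    exact_mod_cast Nat.cast_ne_zero.mpr (by omega)
  have hn1 : (n:ℚ) - 1 ≠ 0 := by
    have : (1:ℚ) < (n:ℚ) := by exact_mod_cast Nat.one_lt_cast.mpr (by omega)
    intro h
    rw [sub_eq_zero] at h
    rw [← h] at this
    exact lt_irrefl _ this
  field_simp
  ring_nf
  ring_nf at c2
  nlinarith [c2]

open Classical in
lemma natCard_eq (n : ℕ) (p : Equiv.Perm (Fin n) → Prop) :
    Nat.card {σ : Equiv.Perm (Fin n) // p σ} = (Finset.univ.filter p).card := by
  rw [Nat.card_eq_fintype_card, Fintype.card_subtype]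

open Classical in
lemma main_count (M : ℕ) : ∀ n c : ℕ, 2*n - c ≤ M → 1 ≤ c → c ≤ n →
    (((Finset.univ.filter (fun σ : Equiv.Perm (Fin n) =>
      Avoids132 σ ∧ skewComponents σ = c)).card : ℚ))
      = (c:ℚ)/(n:ℚ) * ((2*n-c-1).choose (n-1) : ℚ) := by
  induction M with
  | zero =>
    intro n c hM h1 h2
    exact absurd h1 (by omega)
  | succ M ih =>
    intro n c hM h1 h2
    rcases eq_or_lt_of_le h2 with rfl | hlt
    · rw [card_base c (by omega)]
      have e : 2*c - c - 1 = c - 1 := by omega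
      rw [e, Nat.choose_self]
      have hc0 : (c:ℚ) ≠ 0 := Nat.cast_ne_zero.mpr (by omega)
      field_simp
    · obtain ⟨m, rfl⟩ : ∃ m, n = m + 1 := ⟨n-1, by omega⟩
      have hm : 1 ≤ m := by omega
      rw [card_rec m c hm h1]
      have hA : (((Finset.univ.filter (fun τ : Equiv.Perm (Fin m) =>
          Avoids132 τ ∧ skewComponents τ = c - 1)).card : ℚ))
          = ((c:ℚ)-1)/(((m+1 : ℕ):ℚ)-1) * ((2*(m+1)-c-2).choose ((m+1)-2) : ℚ) := by
        rcases eq_or_lt_of_le h1 with rfl | hc2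
        · rw [show (1:ℕ) - 1 = 0 from rfl, card_zero_comps]
          norm_num
        · have h1' : 1 ≤ c - 1 := by omega
          have h2' : c - 1 ≤ m := by omega
          have hM' : 2*m - (c-1) ≤ M := by omega
          rw [ih m (c-1) hM' h1' h2']
          have e1 : 2*m-(c-1)-1 = 2*(m+1)-c-2 := by omega
          have e2 : m-1 = (m+1)-2 := by omega
          rw [e1, e2, Nat.cast_sub h1]
          push_cast
          ring
      have hB : (((Finset.univ.filter (fun σ : Equiv.Perm (Fin (m+1)) =>
          Avoids132 σ ∧ skewComponents σ = c + 1)).card : ℚ))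
          = ((c:ℚ)+1)/(((m+1 : ℕ):ℚ)) * ((2*(m+1)-c-2).choose ((m+1)-1) : ℚ) := by
        have hM' : 2*(m+1) - (c+1) ≤ M := by omega
        rw [ih (m+1) (c+1) hM' (by omega) (by omega)]
        have e1 : 2*(m+1)-(c+1)-1 = 2*(m+1)-c-2 := by omega
        rw [e1]
        push_cast
        ring
      rw [Nat.cast_add, hA, hB]
      exact (rhs_identity (m+1) c h1 hlt).symm

theorem stmt_13 (n c : ℕ) (hc : 1 ≤ c) (hcn : c ≤ n) :
    (Nat.card {σ : Equiv.Perm (Fin n) // Avoids132 σ ∧ skewComponents σ = c} : ℚ) =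
      (c : ℚ) / n * ((2 * n - c - 1).choose (n - 1) : ℚ) := by
  rw [natCard_eq n (fun σ => Avoids132 σ ∧ skewComponents σ = c)]
  have h := main_count (2*n - c) n c (le_refl _) hc hcn
  convert h using 4
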